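/- Let k ≥ 3 be an integer and c > 0 a real number, and set L(n) = ⌊c·n⌋. If E_{L(n),k}(Y) (computed over M_{L(n),n,k}) tends to 1 as n → ∞, then for every real c' with 0 < c' ≤ c, P_{n,⌊c'·n⌋}(k-XOR-SAT) tends to 1 as n → ∞. -/

import Mathlib

open Finset Filter

attribute [local instance] Classical.propDecidable

/-- A `k`-XOR-clause over `n` variables: a `k`-element set of variables
together with a right-hand side in `GF(2) = ZMod 2`. -/
abbrev Clause (n k : ℕ) := {S : Finset (Fin n) // S.card = k} × ZMod 2

/-- A formula in `Ω(n,L,k)`: an ordered `L`-tuple of `k`-XOR-clauses. -/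
abbrev Formula (n L k : ℕ) := Fin L → Clause n k

/-- A formula is satisfiable iff some assignment satisfies every clause. -/
def Satisfiable {n L k : ℕ} (F : Formula n L k) : Prop :=
  ∃ I : Fin n → ZMod 2, ∀ i : Fin L, ∑ j ∈ (F i).1.1, I j = (F i).2

/-- The number of satisfiable formulas in `Ω(n,L,k)`. -/
noncomputable def numSat (n L k : ℕ) : ℕ :=
  Nat.card {F : Formula n L k // Satisfiable F}

/-- `P_{n,L}(k-XOR-SAT)`: the fraction of satisfiable formulas in `Ω(n,L,k)`,
whose total number is `(2 * C(n,k))^L`. -/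
noncomputable def Psat (n L k : ℕ) : ℝ :=
  (numSat n L k : ℝ) / (2 * (n.choose k : ℝ)) ^ L

/-- `M_{L,n,k}`: the set of `L × n` matrices over `ZMod 2` with exactly `k`
nonzero entries in each row. -/
noncomputable def Mset (L n k : ℕ) : Finset (Matrix (Fin L) (Fin n) (ZMod 2)) :=
  Finset.univ.filter fun A =>
    ∀ i : Fin L, (Finset.univ.filter fun j : Fin n => A i j ≠ 0).card = k

/-- `Y(A)`: the number of vectors in the kernel of the transpose of `A`. -/
noncomputable def Ycount {L n : ℕ} (A : Matrix (Fin L) (Fin n) (ZMod 2)) : ℕ :=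
  Nat.card {u : Fin L → ZMod 2 // Matrix.vecMul u A = 0}

/-- `E_{L,k}(Y)`: the expectation of `Y` over a uniformly random `A ∈ M_{L,n,k}`
(there are `C(n,k)^L` such matrices). -/
noncomputable def EY (n L k : ℕ) : ℝ :=
  (∑ A ∈ Mset L n k, (Ycount A : ℝ)) / (n.choose k : ℝ) ^ L

/-- `P_(r)`: the fraction of matrices in `M_{L,n,k}` of rank `r`. -/
noncomputable def Prank (n L k r : ℕ) : ℝ :=
  (((Mset L n k).filter fun A => A.rank = r).card : ℝ) / (n.choose k : ℝ) ^ L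

/- ========== auxiliary machinery ========== -/

section Aux

open Matrix

lemma zmod2_cases : ∀ x : ZMod 2, x = 0 ∨ x = 1 := by decide

lemma nat_card_subtype {α : Type*} [Fintype α] (p : α → Prop) :
    Nat.card {x // p x} = (Finset.univ.filter p).card := by
  classical
  rw [Nat.card_eq_fintype_card, Fintype.card_subtype]

/-- The set of weight-`k` vectors (possible rows). -/
noncomputable def Wset (n k : ℕ) : Finset (Fin n → ZMod 2) :=
  Finset.univ.filter fun v => (Finset.univ.filter fun j : Fin n => v j ≠ 0).card = k

lemma Mset_eq_piFinset (L n k : ℕ) :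
    Mset L n k = Fintype.piFinset (fun _ : Fin L => Wset n k) := by
  ext A
  erw [Fintype.mem_piFinset (f := A)]
  simp [Mset, Wset]

lemma card_Wset (n k : ℕ) : (Wset n k).card = n.choose k := by
  have : (Wset n k).card = (Finset.powersetCard k (Finset.univ : Finset (Fin n))).card := by
    apply Finset.card_bij (fun v _ => Finset.univ.filter fun j => v j ≠ 0)
    · intro v hv
      simp only [Wset, Finset.mem_filter] at hv
      simp [Finset.mem_powersetCard, hv.2]
    · intro v hv w hw h
      funext j
      have hj := Finset.ext_iff.1 h j
      simp only [Finset.mem_filter, Finset.mem_univ, true_and] at hj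
      rcases zmod2_cases (v j) with h1 | h1 <;> rcases zmod2_cases (w j) with h2 | h2 <;>
        simp [h1, h2] at hj ⊢
    · intro S hS
      refine ⟨fun j => if j ∈ S then 1 else 0, ?_, ?_⟩
      · simp only [Wset, Finset.mem_filter, Finset.mem_univ, true_and]
        rw [Finset.mem_powersetCard] at hS
        rw [← hS.2]
        congr 1
        ext j
        by_cases h : j ∈ S <;> simp [h]
      · ext j
        by_cases h : j ∈ S <;> simp [h]
  rw [this, Finset.card_powersetCard, Finset.card_univ, Fintype.card_fin]

lemma one_le_Ycount {L n : ℕ} (A : Matrix (Fin L) (Fin n) (ZMod 2)) : 1 ≤ Ycount A := by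
  have : Nonempty {u : Fin L → ZMod 2 // Matrix.vecMul u A = 0} :=
    ⟨⟨0, Matrix.zero_vecMul A⟩⟩
  exact Nat.card_pos

/-- Restriction of a matrix to its first `L'` rows. -/
def resM {L L' n : ℕ} (h : L' ≤ L) (A : Matrix (Fin L) (Fin n) (ZMod 2)) :
    Matrix (Fin L') (Fin n) (ZMod 2) := fun i => A (Fin.castLE h i)

lemma sum_ext_aux {L L' : ℕ} (h : L' ≤ L) (f : Fin L' → ZMod 2) (g : Fin L → ZMod 2) :
    ∑ i : Fin L, (if h2 : (i : ℕ) < L' then f ⟨i, h2⟩ else 0) * g i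
      = ∑ x : Fin L', f x * g (Fin.castLE h x) := by
  rw [← Finset.sum_subset (Finset.subset_univ ((Finset.univ : Finset (Fin L')).map
    (Fin.castLEEmb h)))]
  · rw [Finset.sum_map]
    exact Finset.sum_congr rfl fun i _ => by simp [Fin.is_lt]
  · intro i _ hi
    have hni : ¬(i : ℕ) < L' := fun hlt =>
      hi (Finset.mem_map.2 ⟨⟨(i : ℕ), hlt⟩, Finset.mem_univ _, Fin.ext rfl⟩)
    simp [hni]

lemma Ycount_resM_le {L L' n : ℕ} (h : L' ≤ L) (A : Matrix (Fin L) (Fin n) (ZMod 2)) :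
    Ycount (resM h A) ≤ Ycount A := by
  apply Nat.card_le_card_of_injective
    (f := fun u : {u : Fin L' → ZMod 2 // Matrix.vecMul u (resM h A) = 0} =>
      (⟨fun i => if h2 : (i : ℕ) < L' then u.1 ⟨i, h2⟩ else 0, ?_⟩ :
        {u : Fin L → ZMod 2 // Matrix.vecMul u A = 0}))
  · intro u v huv
    simp only [Subtype.mk.injEq] at huv
    ext i
    have := congrFun huv (Fin.castLE h i)
    simpa [Fin.is_lt] using this
  · funext j
    have hu := congrFun u.2 j
    simp only [Matrix.vecMul, dotProduct, Pi.zero_apply, resM] at hu ⊢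
    rw [sum_ext_aux h]
    exact hu

lemma card_filter_not_lt (L L' : ℕ) (h : L' ≤ L) :
    ((Finset.univ : Finset (Fin L)).filter fun i : Fin L => ¬((i : ℕ) < L')).card = L - L' := by
  have h1 : ((Finset.univ : Finset (Fin L)).filter fun i : Fin L => (i : ℕ) < L')
      = (Finset.univ : Finset (Fin L')).map (Fin.castLEEmb h) := by
    ext i
    simp only [Finset.mem_filter, Finset.mem_univ, true_and, Finset.mem_map]
    constructor
    · intro hi; exact ⟨⟨(i : ℕ), hi⟩, Fin.ext rfl⟩
    · rintro ⟨x, -, rfl⟩; simpa using x.2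
  have h2 := Finset.card_filter_add_card_filter_not
    (s := (Finset.univ : Finset (Fin L))) (p := fun i : Fin L => (i : ℕ) < L')
  rw [h1, Finset.card_map, Finset.card_univ, Fintype.card_fin, Finset.card_univ,
    Fintype.card_fin] at h2
  omega

lemma fiber_card {L L' n k : ℕ} (h : L' ≤ L)
    (A' : (Fin L') → Fin n → ZMod 2)
    (hA' : A' ∈ Fintype.piFinset (fun _ : Fin L' => Wset n k)) :
    ((Fintype.piFinset (fun _ : Fin L => Wset n k)).filter
        fun A => resM h A = A').card = (Wset n k).card ^ (L - L') := by
  have hset : (Fintype.piFinset (fun _ : Fin L => Wset n k)).filter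
        (fun A => resM h A = A')
      = Fintype.piFinset (fun i : Fin L =>
          if h2 : (i : ℕ) < L' then {A' ⟨(i : ℕ), h2⟩} else Wset n k) := by
    ext A
    erw [Finset.mem_filter, Fintype.mem_piFinset, Fintype.mem_piFinset]
    constructor
    · rintro ⟨h1, rfl⟩
      intro i
      by_cases h2 : (i : ℕ) < L'
      · rw [dif_pos h2]
        simp only [Finset.mem_singleton, resM]
        congr 1
      · rw [dif_neg h2]; exact h1 i
    · intro h1
      constructor
      · intro i
        by_cases h2 : (i : ℕ) < L'
        · have hx := h1 i
          rw [dif_pos h2, Finset.mem_singleton] at hx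
          rw [hx]
          exact Fintype.mem_piFinset.1 hA' _
        · have hx := h1 i; rwa [dif_neg h2] at hx
      · funext i
        have hx := h1 (Fin.castLE h i)
        rw [dif_pos (by simpa using i.2), Finset.mem_singleton] at hx
        simpa [resM] using hx
  erw [hset, Fintype.card_piFinset]
  have hc : ∀ i : Fin L, (if h2 : (i : ℕ) < L' then ({A' ⟨(i : ℕ), h2⟩} : Finset _)
      else Wset n k).card = if (i : ℕ) < L' then 1 else (Wset n k).card := by
    intro i; by_cases h2 : (i : ℕ) < L' <;> simp [h2]
  rw [Finset.prod_congr rfl (fun i _ => hc i)]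
  rw [Finset.prod_ite, Finset.prod_const, Finset.prod_const, one_pow, one_mul,
    card_filter_not_lt L L' h]

/-- The number of right-hand sides making a fixed clause-set matrix satisfiable. -/
noncomputable def satC {L n : ℕ} (A : Matrix (Fin L) (Fin n) (ZMod 2)) : ℕ :=
  Nat.card (LinearMap.range (Matrix.mulVecLin A))

lemma satC_mul_Ycount {L n : ℕ} (A : Matrix (Fin L) (Fin n) (ZMod 2)) :
    satC A * Ycount A = 2 ^ L := by
  have hY : Ycount A = Nat.card (LinearMap.ker (Matrix.mulVecLin (Matrix.transpose A))) := by
    apply Nat.card_congr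
    apply Equiv.subtypeEquivRight
    intro u
    rw [LinearMap.mem_ker, Matrix.mulVecLin_apply, Matrix.mulVec_transpose]
  have hcard : ∀ (M : Submodule (ZMod 2) (Fin L → ZMod 2)),
      Nat.card M = 2 ^ Module.finrank (ZMod 2) M := by
    intro M
    rw [Nat.card_eq_fintype_card, Module.card_eq_pow_finrank (K := ZMod 2), ZMod.card]
  have hrn := LinearMap.finrank_range_add_finrank_ker
    (Matrix.mulVecLin (Matrix.transpose A))
  rw [Module.finrank_fin_fun] at hrn
  have hrank : Module.finrank (ZMod 2)
      (LinearMap.range (Matrix.mulVecLin (Matrix.transpose A))) = A.rank := by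
    rw [← Matrix.rank_transpose A]; rfl
  have hrankA : Module.finrank (ZMod 2) (LinearMap.range (Matrix.mulVecLin A)) = A.rank := rfl
  rw [hY, hcard, satC, hcard, hrankA, ← pow_add]
  congr 1
  omega

/-- The matrix associated with a tuple of clause supports. -/
def matG {n L k : ℕ} (G : Fin L → {S : Finset (Fin n) // S.card = k}) :
    Matrix (Fin L) (Fin n) (ZMod 2) := fun i j => if j ∈ (G i).1 then 1 else 0

lemma matG_row_filter {n L k : ℕ} (G : Fin L → {S : Finset (Fin n) // S.card = k}) (i : Fin L) :
    (Finset.univ.filter fun j : Fin n => matG G i j ≠ 0) = (G i).1 := by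
  ext j
  by_cases h : j ∈ (G i).1 <;> simp [matG, h]

lemma matG_mem {n L k : ℕ} (G : Fin L → {S : Finset (Fin n) // S.card = k}) :
    matG G ∈ Fintype.piFinset (fun _ : Fin L => Wset n k) := by
  erw [Fintype.mem_piFinset]
  intro i
  simp only [Wset, Finset.mem_filter, Finset.mem_univ, true_and]
  rw [matG_row_filter]
  exact (G i).2

lemma mulVec_matG {n L k : ℕ} (G : Fin L → {S : Finset (Fin n) // S.card = k})
    (I : Fin n → ZMod 2) (i : Fin L) :
    (matG G).mulVec I i = ∑ j ∈ (G i).1, I j := by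
  simp only [Matrix.mulVec, dotProduct, matG, ite_mul, one_mul, zero_mul]
  rw [Finset.sum_ite_mem, Finset.univ_inter]

lemma numSat_eq (n L k : ℕ) :
    numSat n L k = ∑ A ∈ Fintype.piFinset (fun _ : Fin L => Wset n k), satC A := by
  classical
  rw [numSat, Nat.card_eq_fintype_card, Fintype.card_subtype]
  rw [Finset.card_filter]
  rw [← Equiv.sum_comp (Equiv.arrowProdEquivProdArrow (Fin L) _ _).symm
    (fun F => if Satisfiable (n := n) (L := L) (k := k) F then 1 else 0)]
  rw [Fintype.sum_prod_type]
  have hinner : ∀ G : Fin L → {S : Finset (Fin n) // S.card = k},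
      (∑ ε : Fin L → ZMod 2,
        if Satisfiable ((Equiv.arrowProdEquivProdArrow (Fin L) _ _).symm (G, ε)) then 1 else 0)
      = satC (matG G) := by
    intro G
    have hsat : ∀ ε : Fin L → ZMod 2,
        Satisfiable ((Equiv.arrowProdEquivProdArrow (Fin L) _ _).symm (G, ε))
          ↔ ε ∈ LinearMap.range (matG G).mulVecLin := by
      intro ε
      constructor
      · rintro ⟨I, hI⟩
        exact ⟨I, funext fun i => by
          rw [Matrix.mulVecLin_apply, mulVec_matG]
          exact hI i⟩
      · rintro ⟨I, hI⟩
        exact ⟨I, fun i => by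
          have := congrFun hI i
          rwa [Matrix.mulVecLin_apply, mulVec_matG] at this⟩
    rw [Finset.sum_congr rfl (fun ε _ => by rw [hsat ε]), ← Finset.card_filter]
    have h2 : satC (matG G)
        = Nat.card {ε : Fin L → ZMod 2 // ε ∈ LinearMap.range (matG G).mulVecLin} :=
      Nat.card_congr (Equiv.subtypeEquivRight fun _ => Iff.rfl)
    rw [h2, nat_card_subtype]
  rw [Finset.sum_congr rfl (fun G _ => hinner G)]
  apply Finset.sum_bij (i := fun G _ => matG G)
  · intro G _; exact matG_mem G
  · intro G _ G' _ hGG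
    funext i
    apply Subtype.ext
    rw [← matG_row_filter G i, ← matG_row_filter G' i, hGG]
  · intro A hA
    have hk : ∀ i : Fin L, (Finset.univ.filter fun j : Fin n => A i j ≠ 0).card = k := by
      intro i
      have := Fintype.mem_piFinset.1 hA i
      simpa [Wset] using this
    refine ⟨fun i => ⟨Finset.univ.filter fun j : Fin n => A i j ≠ 0, hk i⟩, Finset.mem_univ _, ?_⟩
    funext i j
    simp only [matG, Finset.mem_filter, Finset.mem_univ, true_and]
    rcases zmod2_cases (A i j) with h | h <;> simp [h]
  · intro G _; rfl

lemma one_le_EY {n L k : ℕ} (hkn : k ≤ n) : 1 ≤ EY n L k := by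
  have hC0 : (0 : ℝ) < (n.choose k : ℝ) := by exact_mod_cast Nat.choose_pos hkn
  have hC : (0 : ℝ) < (n.choose k : ℝ) ^ L := by positivity
  rw [EY, Mset_eq_piFinset, le_div_iff₀ hC, one_mul]
  have h1 : ((n.choose k : ℝ)) ^ L
      = ∑ _A ∈ Fintype.piFinset (fun _ : Fin L => Wset n k), (1 : ℝ) := by
    rw [Finset.sum_const, nsmul_eq_mul, mul_one, Fintype.card_piFinset,
      Finset.prod_const, card_Wset]
    push_cast
    simp
  rw [h1]
  exact Finset.sum_le_sum fun A _ => by exact_mod_cast one_le_Ycount A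

lemma EY_mono {n L L' k : ℕ} (hkn : k ≤ n) (h : L' ≤ L) : EY n L' k ≤ EY n L k := by
  have hC : (0 : ℝ) < (n.choose k : ℝ) := by
    exact_mod_cast Nat.choose_pos hkn
  have key : ((n.choose k : ℝ)) ^ (L - L') *
      (∑ A ∈ Fintype.piFinset (fun _ : Fin L' => Wset n k), (Ycount A : ℝ))
      ≤ ∑ A ∈ Fintype.piFinset (fun _ : Fin L => Wset n k), (Ycount A : ℝ) := by
    have hfib := Finset.sum_fiberwise_of_maps_to'
      (g := resM h) (t := Fintype.piFinset (fun _ : Fin L' => Wset n k))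
      (s := Fintype.piFinset (fun _ : Fin L => Wset n k))
      (fun A hA => by
        erw [Fintype.mem_piFinset] at hA ⊢
        intro i; exact hA _)
      (fun A' => (Ycount A' : ℝ))
    calc ((n.choose k : ℝ)) ^ (L - L') * ∑ A' ∈ _, (Ycount A' : ℝ)
        = ∑ A' ∈ Fintype.piFinset (fun _ : Fin L' => Wset n k),
            (((Fintype.piFinset (fun _ : Fin L => Wset n k)).filter
              fun A => resM h A = A').card : ℝ) * (Ycount A' : ℝ) := by
          erw [Finset.mul_sum]
          refine Finset.sum_congr rfl fun A' hA' => ?_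
          rw [fiber_card h A' hA', card_Wset]
          push_cast
          ring
      _ = ∑ A ∈ Fintype.piFinset (fun _ : Fin L => Wset n k), (Ycount (resM h A) : ℝ) := by
          rw [← hfib]
          refine Finset.sum_congr rfl fun A' _ => ?_
          rw [Finset.sum_const, nsmul_eq_mul]
          norm_num
          left
          congr 1
          ext x
          erw [Finset.mem_filter]
          exact Iff.symm (@Finset.mem_filter _ _ (fun a => Fintype.decidablePiFintype (resM h a) A') _ _)
      _ ≤ ∑ A ∈ Fintype.piFinset (fun _ : Fin L => Wset n k), (Ycount A : ℝ) :=
          Finset.sum_le_sum fun A _ => by exact_mod_cast Ycount_resM_le h A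
  rw [EY, EY, Mset_eq_piFinset, Mset_eq_piFinset,
    div_le_div_iff₀ (by positivity) (by positivity)]
  calc (∑ A ∈ Fintype.piFinset (fun _ : Fin L' => Wset n k), (Ycount A : ℝ)) * (n.choose k : ℝ) ^ L
      = ((n.choose k : ℝ) ^ (L - L') * ∑ A ∈ Fintype.piFinset (fun _ : Fin L' => Wset n k),
          (Ycount A : ℝ)) * (n.choose k : ℝ) ^ L' := by
        have hL : ((n.choose k : ℝ)) ^ L
            = (n.choose k : ℝ) ^ (L - L') * (n.choose k : ℝ) ^ L' := by
          rw [← pow_add]; congr 1; omega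
        rw [hL]; ring
    _ ≤ _ := by
        apply mul_le_mul_of_nonneg_right key (by positivity)

lemma Psat_eq {n L k : ℕ} :
    Psat n L k = (∑ A ∈ Fintype.piFinset (fun _ : Fin L => Wset n k),
      1 / (Ycount A : ℝ)) / (n.choose k : ℝ) ^ L := by
  rw [Psat, numSat_eq, mul_pow]
  have hsum : ((∑ A ∈ Fintype.piFinset (fun _ : Fin L => Wset n k), satC A : ℕ) : ℝ)
      = (2 : ℝ) ^ L * ∑ A ∈ Fintype.piFinset (fun _ : Fin L => Wset n k),
          1 / (Ycount A : ℝ) := by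
    erw [Nat.cast_sum]
    erw [Finset.mul_sum]
    refine Finset.sum_congr rfl fun A _ => ?_
    have hY : (0 : ℝ) < (Ycount A : ℝ) := by
      exact_mod_cast Nat.lt_of_lt_of_le Nat.zero_lt_one (one_le_Ycount A)
    have hprod : (satC A : ℝ) * (Ycount A : ℝ) = (2 : ℝ) ^ L := by
      exact_mod_cast congrArg (Nat.cast : ℕ → ℝ) (satC_mul_Ycount A)
    field_simp
    linarith [hprod]
  rw [hsum]
  have h2 : (0 : ℝ) < (2 : ℝ) ^ L := by positivity
  rw [mul_div_mul_left _ _ (ne_of_gt h2)]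

lemma Psat_le_one {n L k : ℕ} (hkn : k ≤ n) : Psat n L k ≤ 1 := by
  have hC0 : (0 : ℝ) < (n.choose k : ℝ) := by exact_mod_cast Nat.choose_pos hkn
  have hC : (0 : ℝ) < (n.choose k : ℝ) ^ L := by positivity
  rw [Psat_eq, div_le_one hC]
  calc ∑ A ∈ Fintype.piFinset (fun _ : Fin L => Wset n k), 1 / (Ycount A : ℝ)
      ≤ ∑ _A ∈ Fintype.piFinset (fun _ : Fin L => Wset n k), (1 : ℝ) := by
        refine Finset.sum_le_sum fun A _ => ?_
        have h1 : (1 : ℝ) ≤ (Ycount A : ℝ) := by exact_mod_cast one_le_Ycount A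
        rw [div_le_one (by linarith)]
        exact h1
    _ = (n.choose k : ℝ) ^ L := by
        rw [Finset.sum_const, nsmul_eq_mul, mul_one, Fintype.card_piFinset,
          Finset.prod_const, card_Wset]
        push_cast
        simp

lemma two_sub_EY_le_Psat {n L k : ℕ} (hkn : k ≤ n) : 2 - EY n L k ≤ Psat n L k := by
  have hC0 : (0 : ℝ) < (n.choose k : ℝ) := by exact_mod_cast Nat.choose_pos hkn
  have hC : (0 : ℝ) < (n.choose k : ℝ) ^ L := by positivity
  rw [Psat_eq, EY, Mset_eq_piFinset]
  have key : 2 * (n.choose k : ℝ) ^ L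
        - (∑ A ∈ Fintype.piFinset (fun _ : Fin L => Wset n k), (Ycount A : ℝ))
      ≤ ∑ A ∈ Fintype.piFinset (fun _ : Fin L => Wset n k), 1 / (Ycount A : ℝ) := by
    have hsum : 2 * (n.choose k : ℝ) ^ L
          - (∑ A ∈ Fintype.piFinset (fun _ : Fin L => Wset n k), (Ycount A : ℝ))
        = ∑ A ∈ Fintype.piFinset (fun _ : Fin L => Wset n k), (2 - (Ycount A : ℝ)) := by
      rw [Finset.sum_sub_distrib, Finset.sum_const, nsmul_eq_mul, Fintype.card_piFinset,
        Finset.prod_const, card_Wset, Finset.card_univ, Fintype.card_fin]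
      push_cast
      ring
    rw [hsum]
    refine Finset.sum_le_sum fun A _ => ?_
    have h1 : (1 : ℝ) ≤ (Ycount A : ℝ) := by exact_mod_cast one_le_Ycount A
    rw [le_div_iff₀ (by linarith)]
    nlinarith
  have h2 : (2 * (n.choose k : ℝ) ^ L
        - (∑ A ∈ Fintype.piFinset (fun _ : Fin L => Wset n k), (Ycount A : ℝ)))
          / (n.choose k : ℝ) ^ L
      ≤ (∑ A ∈ Fintype.piFinset (fun _ : Fin L => Wset n k), 1 / (Ycount A : ℝ))
          / (n.choose k : ℝ) ^ L := by
    gcongr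
  calc 2 - (∑ A ∈ Fintype.piFinset (fun _ : Fin L => Wset n k), (Ycount A : ℝ))
          / (n.choose k : ℝ) ^ L
      = (2 * (n.choose k : ℝ) ^ L
          - (∑ A ∈ Fintype.piFinset (fun _ : Fin L => Wset n k), (Ycount A : ℝ)))
            / (n.choose k : ℝ) ^ L := by
        rw [sub_div, mul_div_assoc, div_self (ne_of_gt hC), mul_one]
    _ ≤ _ := h2

end Aux


/-- If `E_{⌊c·n⌋,k}(Y) → 1` as `n → ∞`, then for every `0 < c' ≤ c`,
`P_{n,⌊c'·n⌋}(k-XOR-SAT) → 1` as `n → ∞`. -/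
theorem tendsto_Psat_of_tendsto_EY (k : ℕ) (hk : 3 ≤ k) (c : ℝ) (hc : 0 < c)
    (hE : Tendsto (fun n : ℕ => EY n ⌊c * n⌋₊ k) atTop (nhds 1)) :
    ∀ c' : ℝ, 0 < c' → c' ≤ c →
      Tendsto (fun n : ℕ => Psat n ⌊c' * n⌋₊ k) atTop (nhds 1) := by
  classical
  intro c' hc'0 hc'c
  have hEY' : Tendsto (fun n : ℕ => EY n ⌊c' * n⌋₊ k) atTop (nhds 1) := by
    refine tendsto_of_tendsto_of_tendsto_of_le_of_le' tendsto_const_nhds hE ?_ ?_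
    · filter_upwards [eventually_ge_atTop k] with n hn
      exact one_le_EY hn
    · filter_upwards [eventually_ge_atTop k] with n hn
      refine EY_mono hn (Nat.floor_le_floor ?_)
      have hn0 : (0 : ℝ) ≤ (n : ℝ) := Nat.cast_nonneg n
      nlinarith
  have hlow : Tendsto (fun n : ℕ => 2 - EY n ⌊c' * n⌋₊ k) atTop (nhds 1) := by
    have := (tendsto_const_nhds (x := (2 : ℝ)) (f := atTop (α := ℕ))).sub hEY'
    norm_num at this
    exact this
  refine tendsto_of_tendsto_of_tendsto_of_le_of_le' hlow tendsto_const_nhds ?_ ?_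
  · filter_upwards [eventually_ge_atTop k] with n hn
    exact two_sub_EY_le_Psat hn
  · filter_upwards [eventually_ge_atTop k] with n hn
    exact Psat_le_one hn
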